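/- arXiv:1602.01591 — 5 statements merged into one kernel-verified Lean document; each statement's English description precedes it below -/
import Mathlib

section
/- Let p, q be odd primes and b, c ≥ 1 integers such that q = σ(p^{2b})/u for a positive integer u, and p^c exactly divides q+1 (i.e., p^c | q+1 but p^{c+1} ∤ q+1). Then (p-1)·u ≡ 1 (mod p^c), and consequently (p-1)·u > p^c. -/
theorem stmt_4 (p q b c u : ℕ) (hp : p.Prime) (hpodd : Odd p) (hq : q.Prime) (hqodd : Odd q)
    (hb : 1 ≤ b) (hc : 1 ≤ c) (hu : 0 < u) (hqu : q * u = ArithmeticFunction.sigma 1 (p ^ (2 * b)))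
    (hdvd : p ^ c ∣ q + 1) (hndvd : ¬ p ^ (c + 1) ∣ q + 1) :
    (p - 1) * u ≡ 1 [MOD p ^ c] ∧ (p - 1) * u > p ^ c := by
  have hp2 : 2 ≤ p := hp.two_le
  have hp3 : 3 ≤ p := by
    rcases Nat.lt_or_ge p 3 with h | h
    · interval_cases p
      · exact absurd hpodd (by decide)
    · exact h
  have hsig : ArithmeticFunction.sigma 1 (p ^ (2 * b)) = ∑ k ∈ Finset.range (2 * b + 1), p ^ k :=
    ArithmeticFunction.sigma_one_apply_prime_pow hp
  have hσlt : (∑ k ∈ Finset.range (2 * b + 1), p ^ k) < p ^ (2 * b + 1) :=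
    Nat.geomSum_lt (by omega) (fun k hk => Finset.mem_range.mp hk)
  have hqle : q + 1 ≤ p ^ (2 * b + 1) := by
    have : q ≤ q * u := Nat.le_mul_of_pos_right q hu
    omega
  have hcle : c ≤ 2 * b + 1 := by
    by_contra h
    have h1 : p ^ (2 * b + 1) < p ^ c := Nat.pow_lt_pow_right hp.one_lt (by omega)
    have h2 := Nat.le_of_dvd (by omega) hdvd
    omega
  have key : ((p : ℤ) - 1) * ((q : ℤ) * u) = (p : ℤ) ^ (2 * b + 1) - 1 := by
    have := congrArg (fun n : ℕ => (n : ℤ)) hqu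
    simp only [hsig] at this
    push_cast at this
    rw [this, mul_comm, geom_sum_mul]
  have hz : ((p - 1) * u : ℕ) ≡ 1 [MOD p ^ c] := by
    rw [← ZMod.natCast_eq_natCast_iff]
    have hq1 : ((q : ZMod (p ^ c))) = -1 := by
      have h0 : ((q + 1 : ℕ) : ZMod (p ^ c)) = 0 :=
        (ZMod.natCast_eq_zero_iff _ _).mpr hdvd
      push_cast at h0
      linear_combination h0
    have hpz : ((p : ZMod (p ^ c))) ^ (2 * b + 1) = 0 := by
      have : (p : ℕ) ^ c ∣ p ^ (2 * b + 1) := pow_dvd_pow p hcle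
      have h0 : ((p ^ (2 * b + 1) : ℕ) : ZMod (p ^ c)) = 0 :=
        (ZMod.natCast_eq_zero_iff _ _).mpr this
      push_cast at h0
      exact h0
    have keyz : ((p : ZMod (p ^ c)) - 1) * ((q : ZMod (p ^ c)) * u) =
        (p : ZMod (p ^ c)) ^ (2 * b + 1) - 1 := by
      have := congrArg (fun z : ℤ => (z : ZMod (p ^ c))) key
      push_cast at this
      exact this
    rw [hq1, hpz] at keyz
    have : ((p : ZMod (p ^ c)) - 1) * u = 1 := by linear_combination -keyz
    calc (((p - 1) * u : ℕ) : ZMod (p ^ c))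
        = ((p : ZMod (p ^ c)) - 1) * u := by
          push_cast [Nat.cast_sub hp.one_le]; ring
      _ = ((1 : ℕ) : ZMod (p ^ c)) := by rw [this]; simp
  refine ⟨hz, ?_⟩
  have h2le : 2 ≤ (p - 1) * u := by
    have : 2 * 1 ≤ (p - 1) * u := Nat.mul_le_mul (by omega) hu
    omega
  have hdvd' : p ^ c ∣ (p - 1) * u - 1 := (Nat.modEq_iff_dvd' (by omega)).mp hz.symm
  have := Nat.le_of_dvd (by omega) hdvd'
  omega
end

section
/- Let N = q n^2 be an odd perfect number in Eulerian form with k = 1, and let p be the unique prime with q | σ(p^{2b}) where p^{2b} || N. If p divides σ(q) = q + 1, then N > 2q^3. -/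
private lemma geom_id {p : ℕ} (hp : 1 ≤ p) (n : ℕ) :
    (p - 1) * (∑ i ∈ Finset.range n, p ^ i) + 1 = p ^ n := by
  obtain ⟨p', rfl⟩ : ∃ p', p = p' + 1 := ⟨p - 1, by omega⟩
  induction n with
  | zero => simp
  | succ n ih =>
    rw [Finset.sum_range_succ, Nat.mul_add, pow_succ]
    have h1 : (p' + 1 - 1) * (p' + 1) ^ n = p' * (p' + 1) ^ n := by norm_num
    rw [h1] at *
    nlinarith [ih]

private lemma parity_sum {p : ℕ} (hp : p % 2 = 1) (n : ℕ) :
    (∑ i ∈ Finset.range n, p ^ i) % 2 = n % 2 := by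
  induction n with
  | zero => simp
  | succ n ih =>
    rw [Finset.sum_range_succ]
    have hpn : p ^ n % 2 = 1 := by
      rw [Nat.pow_mod, hp, one_pow]; norm_num
    omega

private lemma nine_pow_mod5 (b : ℕ) : 9 ^ b % 5 = 1 ∨ 9 ^ b % 5 = 4 := by
  induction b with
  | zero => simp
  | succ b ih =>
    rw [pow_succ]
    have := Nat.mul_mod (9 ^ b) 9 5
    omega

private lemma key_bound {p c m A : ℕ} (hp3 : 3 ≤ p) (hpodd : p % 2 = 1) (hc : 0 < c)
    (hA : (p - 1) * A + 1 = p ^ c) (hAmod : A % 2 = c % 2)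
    (hdvd : p ^ c ∣ m + A) (hmodd : m % 2 = 1)
    (hm5 : ¬(p = 3 ∧ c = 2 ∧ m = 5)) : 4 * p ^ (c + 1) ≤ m ^ 2 * (p - 1) := by
  have hppos : 0 < p := by omega
  have hpcodd : p ^ c % 2 = 1 := by rw [Nat.pow_mod, hpodd, one_pow]; norm_num
  have h2A : 2 * A + 1 ≤ p ^ c := by
    have h1 : 2 * A ≤ (p - 1) * A := Nat.mul_le_mul_right A (by omega)
    omega
  obtain ⟨k, hk⟩ := hdvd
  have hk1 : 1 ≤ k := by
    rcases Nat.eq_zero_or_pos k with h | h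
    · rw [h, mul_zero] at hk; omega
    · exact h
  have hpc_pos : 0 < p ^ c := pow_pos hppos c
  by_cases hco : c % 2 = 1
  · -- c odd
    have hk2 : 2 ≤ k := by
      rcases Nat.lt_or_ge k 2 with h | h
      · exfalso
        have hk1' : k = 1 := by omega
        rw [hk1', mul_one] at hk
        omega
      · exact h
    have hge2 : 2 * p ^ c ≤ m + A := by
      calc 2 * p ^ c = p ^ c * 2 := by ring
        _ ≤ p ^ c * k := Nat.mul_le_mul_left _ hk2
        _ = m + A := hk.symm
    have hm2 : 3 * p ^ c + 1 ≤ 2 * m := by omega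
    -- chain: 8*p^(c+1) ≤ 9*p^c*p^c ≤ (3p^c+1)^2 ≤ (2m)^2 = 4m^2 ≤ 2*(m^2*(p-1))
    have hpcp : p ^ (c + 1) ≤ p ^ c * p ^ c := by
      rw [← pow_add]
      exact Nat.pow_le_pow_right hppos (by omega)
    have h1 : (3 * p ^ c + 1) ^ 2 ≤ (2 * m) ^ 2 := Nat.pow_le_pow_left hm2 2
    have h2 : 9 * (p ^ c * p ^ c) ≤ (3 * p ^ c + 1) ^ 2 := by nlinarith
    have h3 : 4 * m ^ 2 ≤ 2 * (m ^ 2 * (p - 1)) := by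
      have : m ^ 2 * 2 ≤ m ^ 2 * (p - 1) := Nat.mul_le_mul_left _ (by omega)
      omega
    have h4 : (2 * m) ^ 2 = 4 * m ^ 2 := by ring
    have h5 : 8 * p ^ (c + 1) ≤ 9 * (p ^ c * p ^ c) := by
      have := Nat.mul_le_mul_left 9 hpcp
      omega
    omega
  · -- c even
    have hc2 : 2 ≤ c := by omega
    have hge1 : p ^ c ≤ m + A := by
      calc p ^ c = p ^ c * 1 := by ring
        _ ≤ p ^ c * k := Nat.mul_le_mul_left _ hk1
        _ = m + A := hk.symm
    have hm2 : p ^ c + 1 ≤ 2 * m := by omega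
    by_cases hsp : p = 3 ∧ c = 2
    · obtain ⟨rfl, rfl⟩ := hsp
      have hA4 : A = 4 := by norm_num at hA; omega
      have hm23 : 23 ≤ m := by
        rw [hA4] at hk
        norm_num at hk
        have : ¬(3 = 3 ∧ 2 = 2 ∧ m = 5) → m ≠ 5 := by tauto
        have hm5' : m ≠ 5 := this hm5
        omega
      norm_num
      nlinarith
    · have h16 : 16 ≤ p ^ (c - 1) * (p - 1) := by
        by_cases hp3' : p = 3
        · subst hp3'
          have hc4 : 4 ≤ c := by
            rcases Nat.lt_or_ge c 4 with h | h
            · interval_cases c <;> simp_all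
            · exact h
          have : (3:ℕ) ^ 3 ≤ 3 ^ (c - 1) := Nat.pow_le_pow_right (by norm_num) (by omega)
          have h33 : (3:ℕ) ^ 3 = 27 := by norm_num
          omega
        · have hp5 : 5 ≤ p := by omega
          have : p ^ 1 ≤ p ^ (c - 1) := Nat.pow_le_pow_right hppos (by omega)
          rw [pow_one] at this
          have h5c : 5 ≤ p ^ (c - 1) := hp5.trans this
          have := Nat.mul_le_mul h5c (show 4 ≤ p - 1 by omega)
          omega
      have hpp : p ^ c * p ^ c = p ^ (c + 1) * p ^ (c - 1) := by
        rw [← pow_add, ← pow_add]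
        congr 1
        omega
      have h1 : (p ^ c + 1) ^ 2 ≤ (2 * m) ^ 2 := Nat.pow_le_pow_left hm2 2
      have h2 : p ^ c * p ^ c ≤ (p ^ c + 1) ^ 2 := by nlinarith
      have h3 : 16 * p ^ (c + 1) ≤ (p ^ (c + 1)) * (p ^ (c - 1) * (p - 1)) := by
        calc 16 * p ^ (c + 1) = p ^ (c + 1) * 16 := by ring
          _ ≤ p ^ (c + 1) * (p ^ (c - 1) * (p - 1)) := Nat.mul_le_mul_left _ h16
      have h4 : (p ^ (c + 1)) * (p ^ (c - 1) * (p - 1)) = (p ^ c * p ^ c) * (p - 1) := by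
        rw [hpp]; ring
      have h5 : (p ^ c * p ^ c) * (p - 1) ≤ (2 * m) ^ 2 * (p - 1) :=
        Nat.mul_le_mul_right _ (h2.trans h1)
      have h6 : (2 * m) ^ 2 * (p - 1) = 4 * (m ^ 2 * (p - 1)) := by ring
      omega

set_option maxHeartbeats 1000000 in
theorem stmt_11 (N q n p b : ℕ) (hN : N = q * n ^ 2) (hodd : Odd N) (hperf : Nat.Perfect N)
    (hq : q.Prime) (hq4 : q % 4 = 1) (hgcd : Nat.gcd q n = 1)
    (hnielsen : 9 ≤ N.primeFactors.card)
    (hp : p.Prime) (hpn : p ∣ n) (hpb : p ^ (2 * b) ∣ N) (hpb' : ¬ p ^ (2 * b + 1) ∣ N)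
    (hqdvd : q ∣ ArithmeticFunction.sigma 1 (p ^ (2 * b)))
    (huniq : ∀ p' b', p'.Prime → p' ∣ n → p' ^ (2 * b') ∣ N → ¬ p' ^ (2 * b' + 1) ∣ N →
      q ∣ ArithmeticFunction.sigma 1 (p' ^ (2 * b')) → p' = p)
    (hpq : p ∣ q + 1) : N > 2 * q ^ 3 := by
  have hq2 := hq.two_le
  have hq5 : 5 ≤ q := by
    rcases Nat.lt_or_ge q 5 with h | h
    · interval_cases q <;> omega
    · exact h
  have hNpos : 0 < N := hperf.2
  have hn0 : 0 < n := by
    rcases Nat.eq_zero_or_pos n with h | h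
    · rw [hN, h] at hNpos; simp at hNpos
    · exact h
  have hNodd : N % 2 = 1 := Nat.odd_iff.mp hodd
  have hnodd : n % 2 = 1 := by
    have h1 : n ^ 2 % 2 = (n % 2) ^ 2 % 2 := Nat.pow_mod n 2 2
    have h2 : N % 2 = (q % 2) * (n ^ 2 % 2) % 2 := by rw [hN, Nat.mul_mod]
    have h3 : n % 2 = 0 ∨ n % 2 = 1 := by omega
    rcases h3 with h3 | h3
    · rw [h3] at h1; norm_num at h1
      rw [h1, mul_zero] at h2; omega
    · exact h3
  have hpodd : p % 2 = 1 := by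
    rcases hp.eq_two_or_odd with h | h
    · subst h; obtain ⟨r, rfl⟩ := hpn; omega
    · exact h
  have hp3 : 3 ≤ p := by have := hp.two_le; omega
  have hpq' : ¬ p ∣ q := by
    intro h
    have h1 : p ∣ Nat.gcd q n := Nat.dvd_gcd h hpn
    rw [hgcd] at h1
    have := Nat.le_of_dvd one_pos h1
    omega
  have hb1 : 1 ≤ b := by
    by_contra h
    have hb0 : b = 0 := by omega
    rw [hb0] at hqdvd
    norm_num at hqdvd
    have : q ∣ 1 := by
      simpa [ArithmeticFunction.sigma_one_apply] using hqdvd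
    have := Nat.le_of_dvd one_pos this
    omega
  have hσp_sum : ArithmeticFunction.sigma 1 (p ^ (2 * b))
      = ∑ i ∈ Finset.range (2 * b + 1), p ^ i :=
    ArithmeticFunction.sigma_one_apply_prime_pow hp
  obtain ⟨m, hm⟩ := hqdvd
  have hqm_sum : q * m = ∑ i ∈ Finset.range (2 * b + 1), p ^ i := by
    rw [← hm, hσp_sum]
  have hσq : ArithmeticFunction.sigma 1 q = q + 1 := by
    rw [ArithmeticFunction.sigma_one_apply, hq.divisors,
      Finset.sum_pair (by omega : (1:ℕ) ≠ q)]
    omega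
  have hσN : ArithmeticFunction.sigma 1 N = 2 * N := by
    rw [ArithmeticFunction.sigma_one_apply]
    exact (Nat.perfect_iff_sum_divisors_eq_two_mul hNpos).mp hperf
  have hpKn2 : p ^ (2 * b) ∣ n ^ 2 := by
    have hcop : Nat.Coprime (p ^ (2 * b)) q :=
      Nat.Coprime.pow_left _ (hp.coprime_iff_not_dvd.mpr hpq')
    exact hcop.dvd_of_dvd_mul_left (hN ▸ hpb)
  obtain ⟨u, hu⟩ := hpKn2
  have hpu : ¬ p ∣ u := by
    rintro ⟨v, rfl⟩
    exact hpb' ⟨q * v, by rw [hN, hu]; ring⟩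
  have hu0 : 0 < u := by
    rcases Nat.eq_zero_or_pos u with h | h
    · rw [h, mul_zero] at hu
      have : 0 < n ^ 2 := by positivity
      omega
    · exact h
  have hcop : Nat.Coprime (p ^ (2 * b)) u :=
    Nat.Coprime.pow_left _ (hp.coprime_iff_not_dvd.mpr hpu)
  set σu := ArithmeticFunction.sigma 1 u with hσu_def
  have hσn2 : ArithmeticFunction.sigma 1 (n ^ 2) = (q * m) * σu := by
    rw [hu, ArithmeticFunction.isMultiplicative_sigma.map_mul_of_coprime hcop, hm]
  have hmain : (q + 1) * ((q * m) * σu) = 2 * (q * n ^ 2) := by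
    have hcop2 : Nat.Coprime q (n ^ 2) := Nat.Coprime.pow_right _ hgcd
    have hmult := (ArithmeticFunction.isMultiplicative_sigma (k := 1)).map_mul_of_coprime hcop2
    rw [hN] at hσN
    rw [hmult, hσq, hσn2] at hσN
    exact hσN
  have hq0 : 0 < q := by omega
  have hmain2 : (q + 1) * (m * σu) = 2 * n ^ 2 := by
    apply Nat.eq_of_mul_eq_mul_left hq0
    calc q * ((q + 1) * (m * σu)) = (q + 1) * ((q * m) * σu) := by ring
      _ = 2 * (q * n ^ 2) := hmain
      _ = q * (2 * n ^ 2) := by ring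
  have hσp_pos : 0 < q * m := by
    rw [hqm_sum]
    have h0 : (0:ℕ) ∈ Finset.range (2 * b + 1) := by simp
    calc (0:ℕ) < p ^ 0 := by norm_num
      _ ≤ ∑ i ∈ Finset.range (2 * b + 1), p ^ i :=
        Finset.single_le_sum (fun i _ => Nat.zero_le _) h0
  have hm0 : 0 < m := by
    rcases Nat.eq_zero_or_pos m with h | h
    · rw [h, mul_zero] at hσp_pos; omega
    · exact h
  have hσu0 : 0 < σu := by
    rcases Nat.eq_zero_or_pos σu with h | h
    · rw [h, mul_zero, mul_zero] at hmain2
      have : 0 < n ^ 2 := by positivity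
      omega
    · exact h
  have hgeomσ : (p - 1) * (q * m) + 1 = p ^ (2 * b + 1) := by
    rw [hqm_sum]
    exact geom_id (by omega) _
  have hq1ne : q + 1 ≠ 0 := by omega
  set c := (q + 1).factorization p with hc_def
  have hc1 : 0 < c := hp.factorization_pos_of_dvd hq1ne hpq
  have hpc_dvd : p ^ c ∣ q + 1 := Nat.ordProj_dvd _ _
  set s := (q + 1) / p ^ c with hs_def
  have hsc : p ^ c * s = q + 1 := Nat.ordProj_mul_ordCompl_eq_self (q + 1) p
  have hps : ¬ p ∣ s := Nat.not_dvd_ordCompl hp hq1ne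
  have heq : p ^ c * (s * (m * σu)) = 2 * (p ^ (2 * b) * u) := by
    calc p ^ c * (s * (m * σu)) = (p ^ c * s) * (m * σu) := by ring
      _ = (q + 1) * (m * σu) := by rw [hsc]
      _ = 2 * n ^ 2 := hmain2
      _ = 2 * (p ^ (2 * b) * u) := by rw [hu]
  have hcK : c ≤ 2 * b := by
    by_contra hlt
    have hdl : p ^ (2 * b + 1) ∣ 2 * (p ^ (2 * b) * u) := by
      rw [← heq]
      exact dvd_mul_of_dvd_left (pow_dvd_pow p (by omega)) _
    obtain ⟨w, hw⟩ := hdl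
    have hw2 : p ^ (2 * b) * (2 * u) = p ^ (2 * b) * (p * w) := by
      calc p ^ (2 * b) * (2 * u) = 2 * (p ^ (2 * b) * u) := by ring
        _ = p ^ (2 * b + 1) * w := hw
        _ = p ^ (2 * b) * (p * w) := by rw [pow_succ]; ring
    have h2u : 2 * u = p * w := Nat.eq_of_mul_eq_mul_left (pow_pos (by omega) _) hw2
    have hpdvd2u : p ∣ 2 * u := ⟨w, h2u⟩
    have hcop2 : Nat.Coprime p 2 := hp.coprime_iff_not_dvd.mpr (by
      intro h; have := Nat.le_of_dvd (by norm_num) h; omega)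
    exact hpu (hcop2.dvd_of_dvd_mul_left hpdvd2u)
  have heq2 : s * (m * σu) = 2 * (p ^ (2 * b - c) * u) := by
    apply Nat.eq_of_mul_eq_mul_left (pow_pos (show 0 < p by omega) c)
    rw [heq]
    have hsplit : p ^ (2 * b) = p ^ c * p ^ (2 * b - c) := by
      rw [← pow_add]; congr 1; omega
    rw [hsplit]; ring
  have hdvd_σu : p ^ (2 * b - c) ∣ σu := by
    have h1 : p ^ (2 * b - c) ∣ s * (m * σu) := by
      rw [heq2]; exact ⟨2 * u, by ring⟩
    have hcs : Nat.Coprime (p ^ (2 * b - c)) s :=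
      Nat.Coprime.pow_left _ (hp.coprime_iff_not_dvd.mpr hps)
    have hcm : Nat.Coprime (p ^ (2 * b - c)) m := by
      apply Nat.Coprime.pow_left
      apply hp.coprime_iff_not_dvd.mpr
      intro h
      have h1' : p ∣ (p - 1) * (q * m) := Dvd.dvd.mul_left (h.mul_left q) _
      have h2' : p ∣ p ^ (2 * b + 1) := dvd_pow_self p (by omega)
      have h3' : p ^ (2 * b + 1) - (p - 1) * (q * m) = 1 := by omega
      have : p ∣ 1 := by
        have := Nat.dvd_sub h2' h1'
        rwa [h3'] at this
      have := Nat.le_of_dvd one_pos this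
      omega
    exact hcm.dvd_of_dvd_mul_left (hcs.dvd_of_dvd_mul_left h1)
  have hσu_ge : p ^ (2 * b - c) ≤ σu := Nat.le_of_dvd hσu0 hdvd_σu
  set A := ∑ i ∈ Finset.range c, p ^ i with hA_def
  have hAgeom : (p - 1) * A + 1 = p ^ c := geom_id (by omega) c
  have hsplitsum : q * m = A + ∑ i ∈ Finset.Ico c (2 * b + 1), p ^ i := by
    rw [hqm_sum, hA_def, Finset.sum_range_add_sum_Ico _ (by omega : c ≤ 2 * b + 1)]
  have hpcE : p ^ c ∣ ∑ i ∈ Finset.Ico c (2 * b + 1), p ^ i :=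
    Finset.dvd_sum fun i hi => pow_dvd_pow p (Finset.mem_Ico.mp hi).1
  have hcong : p ^ c ∣ m + A := by
    have h1 : p ^ c ∣ m * (q + 1) := Dvd.dvd.mul_left hpc_dvd m
    have h2 : m * (q + 1) = (m + A) + ∑ i ∈ Finset.Ico c (2 * b + 1), p ^ i := by
      calc m * (q + 1) = q * m + m := by ring
        _ = (A + ∑ i ∈ Finset.Ico c (2 * b + 1), p ^ i) + m := by rw [hsplitsum]
        _ = (m + A) + ∑ i ∈ Finset.Ico c (2 * b + 1), p ^ i := by ring
    have h3 : p ^ c ∣ (m + A) + ∑ i ∈ Finset.Ico c (2 * b + 1), p ^ i := h2 ▸ h1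
    have h4 := Nat.dvd_sub h3 hpcE
    simpa using h4
  have hqmodd : (q * m) % 2 = 1 := by
    rw [hqm_sum, parity_sum hpodd]
    omega
  have hmodd : m % 2 = 1 := by
    have hmm := Nat.mul_mod q m 2
    have hqodd : q % 2 = 1 := by omega
    rcases (by omega : m % 2 = 0 ∨ m % 2 = 1) with h | h
    · rw [h, hqodd, mul_zero] at hmm; omega
    · exact h
  have hAmod : A % 2 = c % 2 := parity_sum hpodd c
  have hm5 : ¬ (p = 3 ∧ c = 2 ∧ m = 5) := by
    rintro ⟨rfl, -, rfl⟩
    have h9 : (9:ℕ) ^ b % 5 = 1 ∨ (9:ℕ) ^ b % 5 = 4 := nine_pow_mod5 b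
    have h3p : (3:ℕ) ^ (2 * b + 1) = 9 ^ b * 3 := by
      rw [pow_succ, pow_mul]; norm_num
    rw [h3p] at hgeomσ
    have hmm := Nat.mul_mod (9 ^ b) 3 5
    omega
  have hkey := key_bound hp3 hpodd hc1 hAgeom hAmod hcong hmodd hm5
  have e1 : (4 * p ^ (c + 1)) * p ^ (2 * b - c) = 4 * p ^ (2 * b + 1) := by
    rw [mul_assoc, ← pow_add]
    congr 2
    omega
  have h4chain : 4 * p ^ (2 * b + 1) ≤ (m ^ 2 * (p - 1)) * σu := by
    rw [← e1]
    exact Nat.mul_le_mul hkey hσu_ge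
  have h6 : (p - 1) * m * (4 * q) < (p - 1) * m * (m * σu) := by
    calc (p - 1) * m * (4 * q) = 4 * ((p - 1) * (q * m)) := by ring
      _ < 4 * p ^ (2 * b + 1) := by omega
      _ ≤ (m ^ 2 * (p - 1)) * σu := h4chain
      _ = (p - 1) * m * (m * σu) := by ring
  have hMge : 4 * q + 1 ≤ m * σu := by
    have hpm_pos : 0 < (p - 1) * m := by
      have : 0 < p - 1 := by omega
      positivity
    have := Nat.lt_of_mul_lt_mul_left (a := (p - 1) * m) h6
    omega
  have h2n2 : (q + 1) * (4 * q + 1) ≤ 2 * n ^ 2 := by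
    rw [← hmain2]
    exact Nat.mul_le_mul_left _ hMge
  have h2n2' : 4 * (q * q) + 5 * q + 1 ≤ 2 * (n * n) := by
    calc 4 * (q * q) + 5 * q + 1 = (q + 1) * (4 * q + 1) := by ring
      _ ≤ 2 * n ^ 2 := h2n2
      _ = 2 * (n * n) := by ring
  have hlt : 2 * (q * q) < n * n := by linarith
  rw [hN]
  calc 2 * q ^ 3 = q * (2 * (q * q)) := by ring
    _ < q * (n * n) := mul_lt_mul_of_pos_left hlt hq0
    _ = q * n ^ 2 := by ring
end

section
/- Let N be an odd perfect number. Then the sum of the reciprocals of the distinct primes dividing N is less than ln 2. -/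
open Finset Real

private lemma exp_cubic' {x : ℝ} (h0 : 0 ≤ x) (h1 : x ≤ 1) :
    Real.exp x ≤ 1 + x + x^2/2 + 2*x^3/9 := by
  have h := Real.exp_bound' h0 h1 (n := 3) (by norm_num)
  simp [Finset.sum_range_succ, Nat.factorial] at h
  nlinarith [h]

private lemma lemA' {x : ℝ} (h0 : 0 < x) (h1 : x ≤ 1/3) :
    Real.exp x < 1 + x + x^2 := by
  have h := exp_cubic' h0.le (by linarith)
  nlinarith

private lemma lemB' {x y : ℝ} (hx : 0 < x) (hy : 0 < y) (hy3 : y ≤ 1/3)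
    (hxy : x * (2 - y) ≤ y) :
    Real.exp (x + y) < (1 + x) * (1 + y + y^2) := by
  have hx5 : x ≤ 3*y/5 := by nlinarith
  have h := exp_cubic' (x := x + y) (by linarith) (by linarith)
  nlinarith [sq_nonneg (x+y), sq_nonneg y, mul_pos hx hy]

private lemma geo_mod_two' {p : ℕ} (hpodd : Odd p) (n : ℕ) :
    (∑ k ∈ range n, p ^ k) % 2 = n % 2 := by
  induction n with
  | zero => simp
  | succ n ih =>
      rw [Finset.sum_range_succ, Nat.add_mod, ih, Nat.pow_mod, Nat.odd_iff.mp hpodd]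
      simp [Nat.add_mod]

theorem stmt_13 (N : ℕ) (hodd : Odd N) (hperf : Nat.Perfect N) :
    ∑ p ∈ N.primeFactors, (1 : ℝ) / p < Real.log 2 := by
  have hN0 : 0 < N := hperf.2
  have hN0' : N ≠ 0 := hN0.ne'
  set S := N.primeFactors with hS
  set a : ℕ → ℕ := fun p => N.factorization p with ha
  set g : ℕ → ℕ := fun p => ∑ k ∈ range (a p + 1), p ^ k with hg
  have hsum : ∑ d ∈ N.divisors, d = 2 * N :=
    (Nat.perfect_iff_sum_divisors_eq_two_mul hN0).mp hperf
  have hprod : ∏ p ∈ S, g p = 2 * N := (Nat.sum_divisors hN0').symm.trans hsum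
  have hNprod : ∏ p ∈ S, p ^ a p = N := by
    rw [← Nat.factorization_prod_pow_eq_self hN0']; rfl
  have hNodd : N % 2 = 1 := Nat.odd_iff.mp hodd
  have hmem : ∀ p ∈ S, p.Prime ∧ p % 2 = 1 ∧ 1 ≤ a p := by
    intro p hp
    obtain ⟨pp, pdvd, -⟩ := Nat.mem_primeFactors.mp hp
    refine ⟨pp, ?_, ?_⟩
    · rcases Nat.Prime.eq_two_or_odd pp with h | h
      · subst h; omega
      · exact h
    · exact Nat.Prime.factorization_pos_of_dvd pp hN0' pdvd
  have hp3 : ∀ p ∈ S, 3 ≤ p := by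
    intro p hp
    obtain ⟨pp, hpo, -⟩ := hmem p hp
    have := pp.two_le
    omega
  have hgpar : ∀ p ∈ S, g p % 2 = (a p + 1) % 2 := fun p hp =>
    geo_mod_two' (Nat.odd_iff.mpr (hmem p hp).2.1) _
  have hgpos : ∀ p ∈ S, 0 < g p := by
    intro p hp
    exact Finset.sum_pos (fun k _ => pow_pos (hmem p hp).1.pos k) nonempty_range_add_one
  -- the real-valued factor
  set F : ℕ → ℝ := fun p => (g p : ℝ) / (p : ℝ) ^ (a p) with hF
  have hppos : ∀ p ∈ S, (0:ℝ) < p := by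
    intro p hp; have := hp3 p hp; positivity
  have hFpos : ∀ p ∈ S, 0 < F p := by
    intro p hp
    exact div_pos (by exact_mod_cast hgpos p hp) (pow_pos (hppos p hp) _)
  have hFprod : ∏ p ∈ S, F p = 2 := by
    have hd : ∏ p ∈ S, ((p:ℝ) ^ a p) = (N:ℝ) := by exact_mod_cast hNprod
    have hn : ∏ p ∈ S, ((g p : ℝ)) = 2 * (N:ℝ) := by exact_mod_cast hprod
    rw [hF]
    simp only [Finset.prod_div_distrib, hn, hd]
    rw [mul_div_assoc, div_self (by exact_mod_cast hN0' : (N:ℝ) ≠ 0), mul_one]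
  have hlog : ∑ p ∈ S, Real.log (F p) = Real.log 2 := by
    rw [← Real.log_prod (fun p hp => (hFpos p hp).ne'), hFprod]
  -- lower bound for F p when exponent ≥ 2
  have hF2 : ∀ p ∈ S, 2 ≤ a p → 1 + 1/(p:ℝ) + (1/(p:ℝ))^2 ≤ F p := by
    intro p hp h2
    obtain ⟨b, hb⟩ : ∃ b, a p = b + 2 := ⟨a p - 2, by omega⟩
    have hge : p ^ b + p ^ (b+1) + p ^ (b+2) ≤ g p := by
      rw [hg]; simp only []
      rw [hb]
      rw [Finset.sum_range_succ, Finset.sum_range_succ, Finset.sum_range_succ]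
      have : 0 ≤ ∑ k ∈ range b, p ^ k := Nat.zero_le _
      omega
    have hgeR : ((p:ℝ)) ^ b + (p:ℝ) ^ (b+1) + (p:ℝ) ^ (b+2) ≤ (g p : ℝ) := by
      exact_mod_cast hge
    have hp0 : (0:ℝ) < p := hppos p hp
    rw [hF]; simp only []
    rw [le_div_iff₀ (pow_pos hp0 _)]
    have key : (1 + 1/(p:ℝ) + (1/(p:ℝ))^2) * (p:ℝ) ^ (a p)
        = (p:ℝ) ^ (b+2) + (p:ℝ) ^ (b+1) + (p:ℝ) ^ b := by
      rw [hb]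
      field_simp
      ring
    rw [key]
    linarith
  -- termwise inequality for exponent ≥ 2
  have hlt2 : ∀ p ∈ S, 2 ≤ a p → 1/(p:ℝ) < Real.log (F p) := by
    intro p hp h2
    have hp0 : (0:ℝ) < p := hppos p hp
    have h3 : (3:ℝ) ≤ p := by exact_mod_cast hp3 p hp
    have hx0 : 0 < 1/(p:ℝ) := by positivity
    have hx3 : 1/(p:ℝ) ≤ 1/3 := by
      rw [div_le_div_iff₀ hp0 (by norm_num)]; linarith
    rw [Real.lt_log_iff_exp_lt (hFpos p hp)]
    calc Real.exp (1/(p:ℝ)) < 1 + 1/(p:ℝ) + (1/(p:ℝ))^2 := lemA' hx0 hx3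
      _ ≤ F p := hF2 p hp h2
  -- existence of a prime with odd exponent
  have hex : ∃ q ∈ S, a q % 2 = 1 := by
    by_contra hc
    push_neg at hc
    have ho : (∏ p ∈ S, g p) % 2 = 1 := by
      rw [Finset.prod_nat_mod]
      have : ∀ p ∈ S, g p % 2 = 1 := by
        intro p hp; have := hgpar p hp; have := hc p hp; omega
      rw [Finset.prod_congr rfl this]
      simp
    rw [hprod] at ho
    omega
  obtain ⟨q, hqS, hqodd⟩ := hex
  set M := ∏ p ∈ S.erase q, g p with hM
  have hfact : g q * M = 2 * N := by rw [hM, Finset.mul_prod_erase _ _ hqS, hprod]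
  have huniq : ∀ p ∈ S.erase q, a p % 2 = 0 := by
    intro p hp
    obtain ⟨hpq, hpS⟩ := Finset.mem_erase.mp hp
    by_contra hc
    have h2p : 2 ∣ g p := by have := hgpar p hpS; omega
    have h2q : 2 ∣ g q := by have := hgpar q hqS; omega
    have h4 : 4 ∣ 2 * N := by
      obtain ⟨u, hu⟩ := h2q
      obtain ⟨v, hv⟩ := h2p
      obtain ⟨w, hw⟩ := Finset.dvd_prod_of_mem g hp
      have hMw : M = 2 * (v * w) := by rw [hM, hw, hv]; ring
      exact ⟨u * (v * w), by rw [← hfact, hu, hMw]; ring⟩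
    omega
  have ha2 : ∀ p ∈ S, p ≠ q → 2 ≤ a p := by
    intro p hp hpq
    have := huniq p (Finset.mem_erase.mpr ⟨hpq, hp⟩)
    have := (hmem p hp).2.2
    omega
  rcases Nat.lt_or_ge (a q) 2 with haq1 | haq2
  · -- a q = 1 : the delicate case
    have haq : a q = 1 := by omega
    have hModd : M % 2 = 1 := by
      rw [hM, Finset.prod_nat_mod]
      have : ∀ p ∈ S.erase q, g p % 2 = 1 := by
        intro p hp
        have := hgpar p (Finset.mem_erase.mp hp).2
        have := huniq p hp
        omega
      rw [Finset.prod_congr rfl this]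
      simp
    have hgq : g q = 1 + q := by
      rw [hg]; simp only [haq]
      rw [Finset.sum_range_succ, Finset.sum_range_succ]
      simp
    have hq3 : 3 ≤ q := hp3 q hqS
    have hqodd' : q % 2 = 1 := (hmem q hqS).2.1
    -- q + 1 = 2u with u odd, u ∣ N
    have h2N : 2 * N = (1 + q) * M := by rw [← hfact, hgq]
    have h4 : ¬ (4 ∣ q + 1) := by
      rintro ⟨k, hk⟩
      have : 2 * N = 4 * (k * M) := by
        rw [h2N, show 1 + q = 4 * k by omega]; ring
      omega
    obtain ⟨u, hu⟩ : ∃ u, q + 1 = 2 * u := ⟨(q+1)/2, by omega⟩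
    have huodd : u % 2 = 1 := by omega
    have huN : u * M = N := by
      have : 2 * N = 2 * (u * M) := by
        rw [h2N, show 1 + q = 2 * u by omega]; ring
      omega
    have hu3 : 3 ≤ u := by omega
    set r := u.minFac with hr
    have hrprime : r.Prime := Nat.minFac_prime (by omega)
    have hrdvdN : r ∣ N := (u.minFac_dvd).trans ⟨M, huN.symm⟩
    have hrS : r ∈ S := Nat.mem_primeFactors.mpr ⟨hrprime, hrdvdN, hN0'⟩
    have hru : r ≤ u := Nat.minFac_le (by omega)
    have hrq : 2 * r ≤ q + 1 := by omega
    have hrneq : r ≠ q := by omega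
    have har2 : 2 ≤ a r := ha2 r hrS hrneq
    have hr3 : 3 ≤ r := hp3 r hrS
    -- the paired inequality
    have hFq : F q = 1 + 1/(q:ℝ) := by
      rw [hF]; simp only [haq, hgq]
      push_cast
      rw [pow_one]
      field_simp
      ring
    have hpair : 1/(q:ℝ) + 1/(r:ℝ) < Real.log (F q) + Real.log (F r) := by
      have hq0 : (0:ℝ) < q := hppos q hqS
      have hr0 : (0:ℝ) < r := hppos r hrS
      have hx0 : (0:ℝ) < 1/(q:ℝ) := by positivity
      have hy0 : (0:ℝ) < 1/(r:ℝ) := by positivity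
      have hy3 : 1/(r:ℝ) ≤ 1/3 := by
        rw [div_le_div_iff₀ hr0 (by norm_num)]
        have : (3:ℝ) ≤ r := by exact_mod_cast hr3
        linarith
      have hxy : (1/(q:ℝ)) * (2 - 1/(r:ℝ)) ≤ 1/(r:ℝ) := by
        have hqr : (2*(r:ℝ) : ℝ) ≤ (q:ℝ) + 1 := by exact_mod_cast hrq
        have h1 : (1/(q:ℝ)) * (2 - 1/(r:ℝ)) = (2*(r:ℝ) - 1)/((q:ℝ)*(r:ℝ)) := by
          field_simp
        rw [h1, div_le_div_iff₀ (by positivity) hr0]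
        nlinarith [mul_nonneg (by linarith : (0:ℝ) ≤ (q:ℝ) + 1 - 2*(r:ℝ)) hr0.le]
      have hexp := lemB' hx0 hy0 hy3 hxy
      have hFr : 1 + 1/(r:ℝ) + (1/(r:ℝ))^2 ≤ F r := hF2 r hrS har2
      have hlt : Real.exp (1/(q:ℝ) + 1/(r:ℝ)) < F q * F r := by
        calc Real.exp (1/(q:ℝ) + 1/(r:ℝ))
            < (1 + 1/(q:ℝ)) * (1 + 1/(r:ℝ) + (1/(r:ℝ))^2) := hexp
          _ ≤ F q * F r := by
              rw [hFq]
              apply mul_le_mul_of_nonneg_left hFr (by positivity)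
      have := (Real.lt_log_iff_exp_lt (mul_pos (hFpos q hqS) (hFpos r hrS))).mpr hlt
      rwa [Real.log_mul (hFpos q hqS).ne' (hFpos r hrS).ne'] at this
    -- assemble
    have hsub : {q, r} ⊆ S := by
      intro p hp
      rcases Finset.mem_insert.mp hp with h | h
      · subst h; exact hqS
      · rw [Finset.mem_singleton.mp h]; exact hrS
    have hsplit : (∑ p ∈ S \ {q, r}, (1:ℝ)/p) + ∑ p ∈ ({q, r} : Finset ℕ), (1:ℝ)/p
        = ∑ p ∈ S, (1:ℝ)/p := Finset.sum_sdiff hsub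
    have hsplit2 : (∑ p ∈ S \ {q, r}, Real.log (F p))
        + ∑ p ∈ ({q, r} : Finset ℕ), Real.log (F p)
        = ∑ p ∈ S, Real.log (F p) := Finset.sum_sdiff hsub
    have hrest : ∑ p ∈ S \ {q, r}, (1:ℝ)/p ≤ ∑ p ∈ S \ {q, r}, Real.log (F p) := by
      apply Finset.sum_le_sum
      intro p hp
      obtain ⟨hpS, hpnot⟩ := Finset.mem_sdiff.mp hp
      have hpq : p ≠ q := by
        intro h; exact hpnot (by rw [h]; exact Finset.mem_insert_self _ _)
      exact (hlt2 p hpS (ha2 p hpS hpq)).le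
    have hpairsum : ∑ p ∈ ({q, r} : Finset ℕ), (1:ℝ)/p
        < ∑ p ∈ ({q, r} : Finset ℕ), Real.log (F p) := by
      rw [Finset.sum_pair hrneq.symm, Finset.sum_pair hrneq.symm]
      linarith [hpair]
    calc ∑ p ∈ S, (1:ℝ)/p
        = (∑ p ∈ S \ {q, r}, (1:ℝ)/p) + ∑ p ∈ ({q, r} : Finset ℕ), (1:ℝ)/p := by
          rw [← hsplit]
      _ < (∑ p ∈ S \ {q, r}, Real.log (F p)) + ∑ p ∈ ({q, r} : Finset ℕ), Real.log (F p) := by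
          linarith
      _ = ∑ p ∈ S, Real.log (F p) := hsplit2
      _ = Real.log 2 := hlog
  · -- all exponents ≥ 2 : termwise
    have hall : ∀ p ∈ S, 2 ≤ a p := by
      intro p hp
      by_cases h : p = q
      · subst h; exact haq2
      · exact ha2 p hp h
    rw [← hlog]
    exact Finset.sum_lt_sum_of_nonempty ⟨q, hqS⟩ (fun p hp => hlt2 p hp (hall p hp))
end

section
/- Let q ≥ 5 be a prime and k an integer with k ≡ 1 (mod 4), k ≥ 5. Then every prime divisor r of 1 + q^2 + q^4 + ... + q^{k-1} satisfies r ≥ 7, provided that either r equals the whole sum or r ≡ 1 (mod (k+1)/2). -/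
theorem stmt_15 (q k r : ℕ) (hq : q.Prime) (hq5 : 5 ≤ q) (hk4 : k % 4 = 1) (hk5 : 5 ≤ k)
    (hr : r.Prime) (hdvd : r ∣ ∑ i ∈ Finset.range ((k - 1) / 2 + 1), q ^ (2 * i))
    (hcond : r = ∑ i ∈ Finset.range ((k - 1) / 2 + 1), q ^ (2 * i) ∨ r % ((k + 1) / 2) = 1) :
    r ≥ 7 := by
  rcases hcond with h | h
  · have h1 : (1 : ℕ) ∈ Finset.range ((k - 1) / 2 + 1) := by
      simp [Finset.mem_range]; omega
    have hle : q ^ (2 * 1) ≤ ∑ i ∈ Finset.range ((k - 1) / 2 + 1), q ^ (2 * i) :=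
      Finset.single_le_sum (f := fun i => q ^ (2 * i)) (fun i _ => Nat.zero_le _) h1
    have h25 : 25 ≤ q ^ (2 * 1) := by
      have : 5 * 5 ≤ q * q := Nat.mul_le_mul hq5 hq5
      simpa [pow_succ, pow_zero] using this
    omega
  · set m := (k + 1) / 2 with hm
    have hm3 : 3 ≤ m := by omega
    have hmodd : m % 2 = 1 := by omega
    have hr2 : 2 ≤ r := hr.two_le
    have hdecomp : r = m * (r / m) + 1 := by
      have := Nat.div_add_mod r m
      omega
    set a := r / m with ha
    clear_value a
    match a, hdecomp with
    | 0, hd => simp at hd; omega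
    | 1, hd =>
      simp at hd
      have heven : r % 2 = 0 := by omega
      have : r = 2 := (Nat.Prime.even_iff hr).mp (Nat.even_iff.mpr heven)
      omega
    | (n+2), hd =>
      have : 2 * m ≤ m * (n + 2) := by nlinarith
      omega
end

section
/- Let N = q^k n^2 be an odd perfect number in Eulerian form with k > 1. Write N = q^k · p_1^{2b_1} ⋯ p_s^{2b_s} · w^2 where p_1, ..., p_s are exactly the primes p dividing n such that q divides σ(p^{2b}) for p^{2b} || N. If no p_i divides σ(q^k), and assuming Cohen's bound ∑_{p|N} 1/p < ln 2 and that there is a prime r ≥ 7 with r || σ(q^k) and r ∉ {p_1,...,p_s}, then 2N > q^{3k} and hence q^k < n. -/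
open ArithmeticFunction Finset in
open scoped ArithmeticFunction.sigma in
theorem aux_not_dvd_sigma (p e : ℕ) (hp : p.Prime) : ¬ p ∣ σ 1 (p ^ e) := by
  rw [sigma_one_apply_prime_pow hp, Finset.sum_range_succ']
  simp only [pow_zero]
  intro h
  have h2 : p ∣ ∑ i ∈ Finset.range e, p ^ (i + 1) :=
    Finset.dvd_sum fun i _ => dvd_pow_self p (Nat.succ_ne_zero i)
  have h1 := (Nat.dvd_add_right h2).mp h
  have := Nat.dvd_one.mp h1
  have := hp.one_lt
  omega

open ArithmeticFunction Finset in
open scoped ArithmeticFunction.sigma in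
theorem aux_lt_sigma (p e : ℕ) (hp : p.Prime) (he : 0 < e) : p ^ e < σ 1 (p ^ e) := by
  rw [sigma_one_apply_prime_pow hp, Finset.sum_range_succ]
  have : 0 < ∑ i ∈ Finset.range e, p ^ i := by
    apply Finset.sum_pos (fun i _ => pow_pos hp.pos i)
    exact Finset.nonempty_range_iff.mpr he.ne'
  omega

open ArithmeticFunction Finset in
open scoped ArithmeticFunction.sigma in
theorem aux_sigma_pos (m : ℕ) (hm : 0 < m) : 0 < σ 1 m := by
  rw [sigma_one_apply]
  apply Finset.sum_pos (fun d hd => Nat.pos_of_mem_divisors hd)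
  exact ⟨m, Nat.mem_divisors_self m hm.ne'⟩

open ArithmeticFunction Finset in
open scoped ArithmeticFunction.sigma in
theorem aux_sigma_even (p e : ℕ) (hp : p.Prime) (hpo : p % 2 = 1) (heo : e % 2 = 1) :
    σ 1 (p ^ e) % 2 = 0 := by
  rw [sigma_one_apply_prime_pow hp, Finset.sum_nat_mod]
  have : ∀ i ∈ Finset.range (e+1), p ^ i % 2 = 1 := fun i _ =>
    Nat.odd_iff.mp ((Nat.odd_iff.mpr hpo).pow)
  rw [Finset.sum_congr rfl this]
  simp [Finset.sum_const]
  omega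

open ArithmeticFunction Finset in
open scoped ArithmeticFunction.sigma in
theorem aux_sigma_real (p e : ℕ) (hp : p.Prime) :
    (σ 1 (p ^ e) : ℝ) ≤ (p:ℝ) ^ e * ((p:ℝ) / ((p:ℝ) - 1)) := by
  have hp1 : (1:ℝ) < p := by exact_mod_cast hp.one_lt
  rw [sigma_one_apply_prime_pow hp]
  push_cast
  rw [geom_sum_eq (ne_of_gt hp1), ← mul_div_assoc]
  rw [div_le_div_iff_of_pos_right (by linarith)]
  rw [← pow_succ]
  have : (0:ℝ) < (p:ℝ) ^ (e+1) := by positivity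
  linarith

theorem aux_ratio (p : ℕ) (hp3 : 3 ≤ p) :
    (p:ℝ) / ((p:ℝ) - 1) ≤ Real.exp (3 / (2 * (p:ℝ))) := by
  have hp' : (3:ℝ) ≤ p := by exact_mod_cast hp3
  have hx : (0:ℝ) < (p:ℝ) / ((p:ℝ) - 1) := div_pos (by linarith) (by linarith)
  rw [← Real.exp_log hx]
  apply Real.exp_le_exp.mpr
  have h1 := Real.log_le_sub_one_of_pos hx
  have h2 : (p:ℝ) / ((p:ℝ) - 1) - 1 = 1 / ((p:ℝ) - 1) := by
    rw [div_sub_one (by linarith)]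
    ring_nf
  have h3 : 1 / ((p:ℝ) - 1) ≤ 3 / (2 * (p:ℝ)) := by
    rw [div_le_div_iff₀ (by linarith) (by linarith)]
    linarith
  linarith

theorem aux_final (x QQ AA BB : ℝ) (hx2 : x ^ 2 = 2) (hx : 0 < x) (hQ : 0 < QQ)
    (hA : 0 < AA) (hB : 0 < BB)
    (h1 : QQ < 2 * x * AA) (h2 : 7 * QQ < 2 * BB) : QQ ^ 2 < AA * BB := by
  have h4 : x * QQ < 4 * AA := by nlinarith [mul_lt_mul_of_pos_left h1 hx]
  have h5 : (x * QQ) * (7 * QQ) < (4 * AA) * (2 * BB) :=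
    mul_lt_mul'' h4 h2 (by positivity) (by positivity)
  have hxge : (8:ℝ)/7 ≤ x := by nlinarith [sq_nonneg (x - 8/7)]
  nlinarith [h5, mul_le_mul_of_nonneg_right (show (8:ℝ) ≤ 7 * x by linarith) (sq_nonneg QQ)]

set_option maxHeartbeats 1600000 in
open ArithmeticFunction Finset in
open scoped ArithmeticFunction.sigma in
theorem stmt_16 (N q k n w s : ℕ) (p b : Fin s → ℕ) (r : ℕ)
    (hN : N = q ^ k * n ^ 2) (hodd : Odd N) (hperf : Nat.Perfect N)
    (hq : q.Prime) (hq4 : q % 4 = 1) (hk4 : k % 4 = 1) (hgcd : Nat.gcd q n = 1) (hk : 1 < k)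
    (hpprime : ∀ i, (p i).Prime) (hpinj : Function.Injective p)
    (hfact : N = q ^ k * (∏ i, p i ^ (2 * b i)) * w ^ 2)
    (hchar : ∀ pp : ℕ, pp.Prime → pp ∣ n →
      (q ∣ ArithmeticFunction.sigma 1 (pp ^ (N.factorization pp)) ↔ ∃ i, pp = p i))
    (hnodvd : ∀ i, ¬ p i ∣ ArithmeticFunction.sigma 1 (q ^ k))
    (hcohen : ∑ pp ∈ N.primeFactors, (1 : ℝ) / pp < Real.log 2)
    (hr : r.Prime) (hr7 : 7 ≤ r)
    (hrdvd : r ∣ ArithmeticFunction.sigma 1 (q ^ k))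
    (hrexact : ¬ r ^ 2 ∣ ArithmeticFunction.sigma 1 (q ^ k))
    (hrnotp : ∀ i, r ≠ p i) :
    2 * N > q ^ (3 * k) ∧ q ^ k < n := by
  -- basic facts
  have hN0 : N ≠ 0 := by rintro rfl; simp [Nat.odd_iff] at hodd
  have hn0 : n ≠ 0 := by rintro rfl; simp at hN; omega
  have hn2 : (n ^ 2 : ℕ) ≠ 0 := pow_ne_zero 2 hn0
  have hqk0 : (0:ℕ) < q ^ k := pow_pos hq.pos k
  have hσN : σ 1 N = 2 * N := by
    rw [sigma_one_apply]
    exact (Nat.perfect_iff_sum_divisors_eq_two_mul (Nat.pos_of_ne_zero hN0)).mp hperf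
  have hcop : Nat.Coprime (q ^ k) (n ^ 2) := Nat.Coprime.pow k 2 hgcd
  have hsplit : σ 1 (q ^ k) * σ 1 (n ^ 2) = 2 * (q ^ k * n ^ 2) := by
    rw [← isMultiplicative_sigma.map_mul_of_coprime hcop, ← hN, hσN, hN]
  set t := σ 1 (q ^ k) with ht
  have hqt : ¬ q ∣ t := aux_not_dvd_sigma q k hq
  have ht0 : 0 < t := aux_sigma_pos _ hqk0
  have hqklt : q ^ k < t := aux_lt_sigma q k hq (by omega)
  have hqkdvd : q ^ k ∣ σ 1 (n ^ 2) := by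
    have h1 : q ^ k ∣ t * σ 1 (n ^ 2) := by
      rw [hsplit]; exact ⟨2 * n ^ 2, by ring⟩
    exact (Nat.Coprime.pow_left k (hq.coprime_iff_not_dvd.mpr hqt)).dvd_of_dvd_mul_left h1
  -- the prime factors of n^2
  set F := (n ^ 2).primeFactors with hF
  have hFsub : F ⊆ N.primeFactors :=
    Nat.primeFactors_mono ⟨q ^ k, by rw [hN]; ring⟩ hN0
  have hFfacts : ∀ pp ∈ F, pp.Prime ∧ pp ∣ n ∧ 3 ≤ pp ∧ pp ≠ q := by
    intro pp hpp
    have hprime := Nat.prime_of_mem_primeFactors hpp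
    have hdvdn : pp ∣ n := hprime.dvd_of_dvd_pow (Nat.dvd_of_mem_primeFactors hpp)
    have hne2 : pp ≠ 2 := by
      rintro rfl
      have h2N : 2 ∣ N := (Nat.dvd_of_mem_primeFactors (hFsub hpp))
      rw [Nat.odd_iff] at hodd
      omega
    have hppq : pp ≠ q := by
      rintro rfl
      have : pp ∣ Nat.gcd pp n := Nat.dvd_gcd dvd_rfl hdvdn
      rw [hgcd] at this
      exact hprime.one_lt.ne' (Nat.dvd_one.mp this)
    exact ⟨hprime, hdvdn, by have := hprime.two_le; omega, hppq⟩
  -- condition and splitting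
  set cond := fun pp => q ∣ σ 1 (pp ^ ((n ^ 2).factorization pp)) with hcond
  set S := F.filter cond with hSdef
  set T := F.filter (fun pp => ¬ cond pp) with hTdef
  -- members of S are among the p i, hence don't divide t
  have hSnd : ∀ pp ∈ S, ¬ pp ∣ t := by
    intro pp hpp hdt
    obtain ⟨hppF, hc⟩ := Finset.mem_filter.mp hpp
    obtain ⟨hprime, hdvdn, -, hppq⟩ := hFfacts pp hppF
    have hfa : N.factorization pp = (n ^ 2).factorization pp := by
      rw [hN, Nat.factorization_mul (pow_ne_zero k hq.pos.ne') hn2]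
      simp only [Finsupp.coe_add, Pi.add_apply]
      rw [hq.factorization_pow, Finsupp.single_apply, if_neg (fun h => hppq h.symm)]
      omega
    obtain ⟨i, rfl⟩ := (hchar pp hprime hdvdn).mp (by rw [hfa]; exact hc)
    exact hnodvd i hdt
  -- sigma(n^2) factorization
  have hfac : σ 1 (n ^ 2) = ∏ pp ∈ F, σ 1 (pp ^ ((n ^ 2).factorization pp)) := by
    rw [isMultiplicative_sigma.multiplicative_factorization _ hn2]
    exact Finset.prod_congr (Nat.support_factorization _) fun _ _ => rfl
  set P := ∏ pp ∈ S, σ 1 (pp ^ ((n ^ 2).factorization pp)) with hPdef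
  set Q := ∏ pp ∈ T, σ 1 (pp ^ ((n ^ 2).factorization pp)) with hQdef
  have hPQ : P * Q = σ 1 (n ^ 2) := by
    rw [hfac, hPdef, hQdef]
    exact Finset.prod_filter_mul_prod_filter_not F cond _
  have hqkP : q ^ k ∣ P := by
    have hcopQ : Nat.Coprime (q ^ k) Q :=
      Nat.Coprime.pow_left k (Nat.Coprime.prod_right fun pp hpp =>
        hq.coprime_iff_not_dvd.mpr (Finset.mem_filter.mp hpp).2)
    exact hcopQ.dvd_of_dvd_mul_right (hPQ ▸ hqkdvd)
  have hP0 : 0 < P := Finset.prod_pos fun pp hpp =>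
    aux_sigma_pos _ (pow_pos (hFfacts pp (Finset.filter_subset _ _ hpp)).1.pos _)
  have hqkleP : q ^ k ≤ P := Nat.le_of_dvd hP0 hqkP
  -- A, B : the S-part and non-S-part of n^2
  set A := ∏ pp ∈ S, pp ^ ((n ^ 2).factorization pp) with hAdef
  set B := ∏ pp ∈ T, pp ^ ((n ^ 2).factorization pp) with hBdef
  have hn2fac : A * B = n ^ 2 := by
    rw [hAdef, hBdef]
    rw [Finset.prod_filter_mul_prod_filter_not F cond _]
    conv_rhs => rw [← Nat.factorization_prod_pow_eq_self hn2]
    exact (Finset.prod_congr (Nat.support_factorization _) fun _ _ => rfl).symm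
  have hA0 : 0 < A := Finset.prod_pos fun pp hpp =>
    pow_pos (hFfacts pp (Finset.filter_subset _ _ hpp)).1.pos _
  have hB0 : 0 < B := Finset.prod_pos fun pp hpp =>
    pow_pos (hFfacts pp (Finset.filter_subset _ _ hpp)).1.pos _
  -- real estimate : P < A * 2√2
  have hPA : (P:ℝ) ≤ (A:ℝ) * ∏ pp ∈ S, ((pp:ℝ) / ((pp:ℝ) - 1)) := by
    rw [hPdef, hAdef]
    push_cast
    rw [← Finset.prod_mul_distrib]
    exact Finset.prod_le_prod (fun _ _ => Nat.cast_nonneg _) fun pp hpp =>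
      aux_sigma_real pp _ (hFfacts pp (Finset.filter_subset _ _ hpp)).1
  have hprod_lt : ∏ pp ∈ S, ((pp:ℝ) / ((pp:ℝ) - 1)) < 2 * Real.sqrt 2 := by
    have h3 : ∀ pp ∈ S, 3 ≤ pp := fun pp hpp =>
      (hFfacts pp (Finset.filter_subset _ _ hpp)).2.2.1
    calc ∏ pp ∈ S, ((pp:ℝ) / ((pp:ℝ) - 1))
        ≤ ∏ pp ∈ S, Real.exp (3 / (2 * (pp:ℝ))) := by
          apply Finset.prod_le_prod
          · intro pp hpp
            have : (3:ℝ) ≤ pp := by exact_mod_cast h3 pp hpp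
            exact div_nonneg (by linarith) (by linarith)
          · exact fun pp hpp => aux_ratio pp (h3 pp hpp)
      _ = Real.exp (∑ pp ∈ S, 3 / (2 * (pp:ℝ))) := (Real.exp_sum S _).symm
      _ < Real.exp ((3/2) * Real.log 2) := by
          apply Real.exp_lt_exp.mpr
          have he : ∑ pp ∈ S, 3 / (2 * (pp:ℝ)) = (3/2) * ∑ pp ∈ S, 1 / (pp:ℝ) := by
            rw [Finset.mul_sum]
            exact Finset.sum_congr rfl fun pp _ => by ring
          have hsub : ∑ pp ∈ S, (1:ℝ) / pp ≤ ∑ pp ∈ N.primeFactors, (1:ℝ) / pp := by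
            apply Finset.sum_le_sum_of_subset_of_nonneg
            · exact fun pp hpp => hFsub (Finset.filter_subset _ _ hpp)
            · intro i _ _; positivity
          rw [he]
          nlinarith [hcohen]
      _ = 2 * Real.sqrt 2 := by
          rw [Real.sqrt_eq_rpow, Real.rpow_def_of_pos (by norm_num : (0:ℝ) < 2),
            show (3/2:ℝ) * Real.log 2 = Real.log 2 + Real.log 2 * (1/2) by ring,
            Real.exp_add, Real.exp_log (by norm_num : (0:ℝ) < 2)]
  have hAebound : (q:ℝ) ^ k < 2 * Real.sqrt 2 * (A:ℝ) := by
    have h1 : ((q ^ k : ℕ) : ℝ) ≤ (P:ℝ) := by exact_mod_cast hqkleP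
    have hA0' : (0:ℝ) < (A:ℝ) := by exact_mod_cast hA0
    push_cast at h1
    calc (q:ℝ) ^ k ≤ (P:ℝ) := h1
      _ ≤ (A:ℝ) * ∏ pp ∈ S, ((pp:ℝ) / ((pp:ℝ) - 1)) := hPA
      _ < (A:ℝ) * (2 * Real.sqrt 2) := by
          exact mul_lt_mul_of_pos_left hprod_lt hA0'
      _ = 2 * Real.sqrt 2 * (A:ℝ) := by ring
  -- now the u = t/2 part
  obtain ⟨u, hu⟩ : 2 ∣ t := by
    apply Nat.dvd_of_mod_eq_zero
    apply aux_sigma_even q k hq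
    · have := Nat.mod_mod_of_dvd q (show 2 ∣ 4 by norm_num)
      omega
    · have := Nat.mod_mod_of_dvd k (show 2 ∣ 4 by norm_num)
      omega
  have hu0 : u ≠ 0 := by omega
  have hqu : ¬ q ∣ u := fun h => hqt (hu ▸ Dvd.dvd.mul_left h 2)
  have hudvd : u ∣ n ^ 2 := by
    have h1 : t ∣ 2 * N := by
      rw [hN, ← hsplit]
      exact dvd_mul_right _ _
    rw [hu, hN] at h1
    have h2 : u ∣ q ^ k * n ^ 2 :=
      (Nat.mul_dvd_mul_iff_left (show 0 < 2 by norm_num)).mp h1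
    exact ((Nat.Coprime.pow_left k (hq.coprime_iff_not_dvd.mpr hqu)).symm).dvd_of_dvd_mul_left h2
  -- u is coprime to A, so u divides B
  have hcopuA : Nat.Coprime u A := by
    apply Nat.Coprime.prod_right
    intro pp hpp
    have hprime := (hFfacts pp (Finset.filter_subset _ _ hpp)).1
    have hppu : ¬ pp ∣ u := fun h => hSnd pp hpp (hu ▸ Dvd.dvd.mul_left h 2)
    exact (Nat.Coprime.pow_right _ (hprime.coprime_iff_not_dvd.mpr hppu).symm)
  have huB : u ∣ B := hcopuA.dvd_of_dvd_mul_left (hn2fac ▸ hudvd)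
  -- r divides u exactly once
  have hr2 : r ≠ 2 := by omega
  have hru : r ∣ u := by
    rcases hrdvd with ⟨c, hc⟩
    rw [hu] at hc
    exact (Nat.Coprime.dvd_of_dvd_mul_left
      ((Nat.coprime_primes hr Nat.prime_two).mpr hr2) ⟨c, hc⟩)
  have hr2u : ¬ r ^ 2 ∣ u := fun h => hrexact (hu ▸ Dvd.dvd.mul_left h 2)
  have hvru : u.factorization r = 1 := by
    have h1 : 1 ≤ u.factorization r :=
      (hr.pow_dvd_iff_le_factorization hu0).mp (by rwa [pow_one])
    have h2 : ¬ 2 ≤ u.factorization r := fun h =>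
      hr2u ((hr.pow_dvd_iff_le_factorization hu0).mpr h)
    omega
  -- B is a perfect square
  obtain ⟨C, hC⟩ : ∃ C, B = C ^ 2 := by
    refine ⟨∏ pp ∈ T, pp ^ n.factorization pp, ?_⟩
    rw [hBdef, ← Finset.prod_pow]
    apply Finset.prod_congr rfl
    intro pp hpp
    rw [← pow_mul]
    have : (n ^ 2).factorization pp = n.factorization pp * 2 := by
      rw [Nat.factorization_pow]
      simp [mul_comm]
    rw [this]
  -- hence u * r divides B
  have hurB : u * r ∣ B := by
    obtain ⟨d, hd⟩ := huB
    have hd0 : d ≠ 0 := by rintro rfl; rw [hd] at hB0; simp at hB0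
    have hrd : r ∣ d := by
      by_contra hrd
      have hfd : d.factorization r = 0 := Nat.factorization_eq_zero_of_not_dvd hrd
      have hB1 : B.factorization r = 1 := by
        rw [hd, Nat.factorization_mul hu0 hd0]
        simp [hvru, hfd]
      have hB2 : B.factorization r = 2 * C.factorization r := by
        rw [hC, Nat.factorization_pow]
        simp
      omega
    rw [hd]
    exact mul_dvd_mul_left u hrd
  have hBlb : u * r ≤ B := Nat.le_of_dvd hB0 hurB
  -- real arithmetic conclusion: (q^k)^2 < n^2
  set x := Real.sqrt 2 with hx
  have hx2 : x ^ 2 = 2 := Real.sq_sqrt (by norm_num)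
  have hxpos : 0 < x := Real.sqrt_pos.mpr (by norm_num)
  set Qr := (q:ℝ) ^ k with hQr
  have hQ0 : 0 < Qr := pow_pos (by exact_mod_cast hq.pos) k
  have hAr : 0 < (A:ℝ) := by exact_mod_cast hA0
  have hBr : 0 < (B:ℝ) := by exact_mod_cast hB0
  have hBlow : 7 * Qr < 2 * (B:ℝ) := by
    have h1 : (u * r : ℕ) ≤ (B:ℕ) := hBlb
    have h2 : 7 * u ≤ u * r := by
      have : 1 ≤ u := Nat.one_le_iff_ne_zero.mpr hu0
      calc 7 * u = u * 7 := by ring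
        _ ≤ u * r := Nat.mul_le_mul_left u hr7
    have h3 : q ^ k < 2 * u := by omega
    have h4 : 7 * (q ^ k) < 2 * B := by
      calc 7 * q ^ k < 7 * (2 * u) := by omega
        _ = 2 * (7 * u) := by ring
        _ ≤ 2 * (u * r) := by omega
        _ ≤ 2 * B := by omega
    rw [hQr]
    exact_mod_cast h4
  have hkey : Qr ^ 2 < (A:ℝ) * (B:ℝ) :=
    aux_final x Qr (A:ℝ) (B:ℝ) hx2 hxpos hQ0 hAr hBr hAebound hBlow
  have hfinal : q ^ (2 * k) < n ^ 2 := by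
    have hcast : ((q ^ (2*k) : ℕ) : ℝ) < ((n ^ 2 : ℕ) : ℝ) := by
      push_cast
      calc (q:ℝ) ^ (2*k) = Qr ^ 2 := by rw [hQr, ← pow_mul, mul_comm]
        _ < (A:ℝ) * (B:ℝ) := hkey
        _ = ((n^2 : ℕ) : ℝ) := by exact_mod_cast congrArg (Nat.cast (R := ℝ)) hn2fac
        _ = (n:ℝ) ^ 2 := by push_cast; ring
    exact_mod_cast hcast
  have hqkn : q ^ k < n := by
    by_contra h
    push_neg at h
    have : n ^ 2 ≤ (q ^ k) ^ 2 := Nat.pow_le_pow_left h 2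
    rw [← pow_mul, mul_comm] at this
    omega
  refine ⟨?_, hqkn⟩
  have h3k : q ^ (3 * k) = q ^ k * q ^ (2 * k) := by
    rw [← pow_add]
    congr 1
    omega
  have hlt : q ^ (3 * k) < q ^ k * n ^ 2 := by
    rw [h3k]
    exact mul_lt_mul_of_pos_left hfinal hqk0
  rw [hN]
  omega
end
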